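/- Portfolio effect: under the Logit model with constant unit costs and sub-quadratic second derivatives, let p ∈ (0,∞)^J be equilibrium prices and suppose two distinct firms f and g offer products j ∈ J_f and k ∈ J_g with identical characteristics (hence w_j = w_k) and identical unit costs c_j = c_k. Then p_j > p_k if and only if π̂_f(p) > π̂_g(p), p_j = p_k if and only if π̂_f(p) = π̂_g(p), and p_j < p_k if and only if π̂_f(p) < π̂_g(p). -/

import Mathlib

open Filter Set

noncomputable def logitP19 {J : ℕ} (w : Fin J → ℝ → ℝ) (v : Fin J → ℝ) (θ : ℝ)
    (p : Fin J → ℝ) (j : Fin J) : ℝ :=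
  Real.exp (w j (p j) + v j) / (Real.exp θ + ∑ k, Real.exp (w k (p k) + v k))

noncomputable def firmProfit19 {J F : ℕ} (w : Fin J → ℝ → ℝ) (v : Fin J → ℝ)
    (θ : ℝ) (c : Fin J → ℝ) (owner : Fin J → Fin F) (g : Fin F)
    (p : Fin J → ℝ) : ℝ :=
  ∑ j ∈ Finset.univ.filter (fun j => owner j = g),
    logitP19 w v θ p j * (p j - c j)

lemma foc19 {J F : ℕ} (w w' : Fin J → ℝ → ℝ) (v : Fin J → ℝ) (θ : ℝ)
    (c : Fin J → ℝ) (owner : Fin J → Fin F)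
    (hd1 : ∀ k : Fin J, ∀ x > (0:ℝ), HasDerivAt (w k) (w' k x) x)
    (hneg : ∀ k : Fin J, ∀ x > (0:ℝ), w' k x < 0)
    (p : Fin J → ℝ) (hp : ∀ i, 0 < p i)
    (heq : ∀ g : Fin F, ∀ q : Fin J → ℝ,
      (∀ i, owner i ≠ g → q i = p i) → (∀ i, 0 ≤ q i) →
      firmProfit19 w v θ c owner g q ≤ firmProfit19 w v θ c owner g p)
    (j : Fin J) :
    p j + 1 / (w' j (p j)) = c j + firmProfit19 w v θ c owner (owner j) p := by
  classical
  set S : Finset (Fin J) := Finset.univ.filter (fun i => owner i = owner j) with hS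
  have hjS : j ∈ S := by simp [hS]
  set ej : ℝ → ℝ := fun t => Real.exp (w j t + v j) with hej
  set Cs : ℝ := ∑ m ∈ Finset.univ.erase j, Real.exp (w m (p m) + v m) with hCs
  set Nf : ℝ := ∑ i ∈ S.erase j, Real.exp (w i (p i) + v i) * (p i - c i) with hNf
  set D : ℝ → ℝ := fun t => Real.exp θ + (ej t + Cs) with hD
  set N : ℝ → ℝ := fun t => ej t * (t - c j) + Nf with hN
  have hA : ∀ t : ℝ, firmProfit19 w v θ c owner (owner j) (Function.update p j t)
      = N t / D t := by
    intro t
    have hden : (∑ m, Real.exp (w m (Function.update p j t m) + v m)) = ej t + Cs := by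
      rw [← Finset.add_sum_erase Finset.univ _ (Finset.mem_univ j)]
      congr 1
      · simp [hej]
      · exact Finset.sum_congr rfl fun m hm => by
          rw [Function.update_of_ne (Finset.ne_of_mem_erase hm)]
    have hnum : (∑ i ∈ S, Real.exp (w i (Function.update p j t i) + v i)
        * (Function.update p j t i - c i)) = N t := by
      rw [← Finset.add_sum_erase S _ hjS, hN, hNf]
      congr 1
      · simp [hej]
      · exact Finset.sum_congr rfl fun i hi => by
          rw [Function.update_of_ne (Finset.ne_of_mem_erase hi)]
    simp only [firmProfit19, logitP19, hden, ← hS]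
    rw [← hnum, Finset.sum_div]
    exact Finset.sum_congr rfl fun i _ => by rw [div_mul_eq_mul_div, hD]
  have hpj := hp j
  have hej' : HasDerivAt ej (ej (p j) * w' j (p j)) (p j) :=
    ((hd1 j _ hpj).add_const (v j)).exp
  have hD' : HasDerivAt D (ej (p j) * w' j (p j)) (p j) := by
    exact ((hej'.add_const Cs).const_add (Real.exp θ))
  have hN' : HasDerivAt N (ej (p j) * w' j (p j) * (p j - c j) + ej (p j) * 1) (p j) :=
    (hej'.mul ((hasDerivAt_id _).sub_const _)).add_const Nf
  have hCs0 : 0 ≤ Cs := Finset.sum_nonneg fun m _ => (Real.exp_pos _).le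
  have hejpos : 0 < ej (p j) := Real.exp_pos _
  have hDpos : 0 < D (p j) := by
    have := Real.exp_pos θ; simp only [hD]; positivity
  have hφ : HasDerivAt (fun t => N t / D t)
      (((ej (p j) * w' j (p j) * (p j - c j) + ej (p j) * 1) * D (p j)
        - N (p j) * (ej (p j) * w' j (p j))) / D (p j) ^ 2) (p j) :=
    hN'.div hD' hDpos.ne'
  have hupd : Function.update p j (p j) = p := Function.update_eq_self _ _
  have hmax : IsLocalMax (fun t => N t / D t) (p j) := by
    filter_upwards [eventually_gt_nhds hpj] with t ht
    rw [← hA t, ← hA (p j), hupd]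
    refine heq (owner j) (Function.update p j t) (fun i hi => ?_) (fun i => ?_)
    · exact Function.update_of_ne (by rintro rfl; exact hi rfl) _ _
    · rcases eq_or_ne i j with rfl | h
      · simpa using ht.le
      · simpa [Function.update_of_ne h] using (hp i).le
  have hzero := hmax.hasDerivAt_eq_zero hφ
  have hnum0 : (ej (p j) * w' j (p j) * (p j - c j) + ej (p j) * 1) * D (p j)
      - N (p j) * (ej (p j) * w' j (p j)) = 0 := by
    have h2 : D (p j) ^ 2 ≠ 0 := pow_ne_zero _ hDpos.ne'
    field_simp at hzero
    linarith [hzero]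
  have hπ : firmProfit19 w v θ c owner (owner j) p = N (p j) / D (p j) := by
    have := hA (p j); rwa [hupd] at this
  rw [hπ]
  have ha : w' j (p j) ≠ 0 := (hneg j _ hpj).ne
  have key : w' j (p j) * (p j - c j) + 1 - (N (p j) / D (p j)) * w' j (p j) = 0 := by
    have hNv : N (p j) = (N (p j) / D (p j)) * D (p j) := by
      field_simp
    have h2 : (w' j (p j) * (p j - c j) + 1 - (N (p j) / D (p j)) * w' j (p j))
        * (ej (p j) * D (p j)) = 0 := by
      rw [hNv] at hnum0
      linear_combination hnum0
    exact (mul_eq_zero.mp h2).resolve_right (mul_pos hejpos hDpos).ne'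
  have h3 : 1 / w' j (p j) = c j + N (p j) / D (p j) - p j := by
    rw [div_eq_iff ha]; linear_combination key
  linarith

theorem stmt_19 {J F : ℕ} (w w' w'' : Fin J → ℝ → ℝ) (v : Fin J → ℝ) (θ : ℝ)
    (c : Fin J → ℝ) (owner : Fin J → Fin F) (hc : ∀ i, 0 ≤ c i)
    (hd1 : ∀ k : Fin J, ∀ x > (0:ℝ), HasDerivAt (w k) (w' k x) x)
    (hd2 : ∀ k : Fin J, ∀ x > (0:ℝ), HasDerivAt (w' k) (w'' k x) x)
    (hneg : ∀ k : Fin J, ∀ x > (0:ℝ), w' k x < 0)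
    -- sub-quadratic second derivatives
    (hsq : ∀ k : Fin J, ∀ x > (0:ℝ), w'' k x / (w' k x) ^ 2 < 1)
    -- equilibrium prices p ∈ (0,∞)^J : each firm maximizes its own profit
    (p : Fin J → ℝ) (hp : ∀ i, 0 < p i)
    (heq : ∀ g : Fin F, ∀ q : Fin J → ℝ,
      (∀ i, owner i ≠ g → q i = p i) → (∀ i, 0 ≤ q i) →
      firmProfit19 w v θ c owner g q ≤ firmProfit19 w v θ c owner g p)
    (j k : Fin J) (hfg : owner j ≠ owner k)
    (hwjk : w j = w k) (hwjk' : w' j = w' k) (hcjk : c j = c k) :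
    (p j > p k ↔
      firmProfit19 w v θ c owner (owner j) p > firmProfit19 w v θ c owner (owner k) p) ∧
    (p j = p k ↔
      firmProfit19 w v θ c owner (owner j) p = firmProfit19 w v θ c owner (owner k) p) ∧
    (p j < p k ↔
      firmProfit19 w v θ c owner (owner j) p < firmProfit19 w v θ c owner (owner k) p) := by
  set πf := firmProfit19 w v θ c owner (owner j) p with hπf
  set πg := firmProfit19 w v θ c owner (owner k) p with hπg
  set T : ℝ → ℝ := fun x => x + (w' j x)⁻¹ with hT
  have hTd : ∀ x ∈ Ioi (0:ℝ), HasDerivAt T (1 - w'' j x / (w' j x) ^ 2) x := by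
    intro x hx
    have h := (hasDerivAt_id x).add (((hd2 j x hx).inv (hneg j x hx).ne))
    rw [show (1 - w'' j x / (w' j x) ^ 2) = 1 + -(w'' j x) / (w' j x) ^ 2 by ring]
    exact h
  have hmono : StrictMonoOn T (Ioi 0) := by
    refine strictMonoOn_of_deriv_pos (convex_Ioi 0)
      (fun x hx => ((hTd x hx).continuousAt.continuousWithinAt)) (fun x hx => ?_)
    rw [interior_Ioi] at hx
    rw [(hTd x hx).deriv]
    have := hsq j x hx
    linarith
  have hfj := foc19 w w' v θ c owner hd1 hneg p hp heq j
  have hfk := foc19 w w' v θ c owner hd1 hneg p hp heq k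
  have hTj : T (p j) = c j + πf := by
    rw [hT]; simpa [one_div] using hfj
  have hTk : T (p k) = c j + πg := by
    rw [hT, hwjk', hcjk]; simpa [one_div] using hfk
  have h1 : p k < p j ↔ πg < πf := by
    rw [← (hmono.lt_iff_lt (mem_Ioi.2 (hp k)) (mem_Ioi.2 (hp j))), hTj, hTk,
      add_lt_add_iff_left]
  have h2 : p j < p k ↔ πf < πg := by
    rw [← (hmono.lt_iff_lt (mem_Ioi.2 (hp j)) (mem_Ioi.2 (hp k))), hTj, hTk,
      add_lt_add_iff_left]
  refine ⟨h1, ⟨?_, ?_⟩, h2⟩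
  · intro h
    rcases lt_trichotomy πf πg with h' | h' | h'
    · exact absurd (h2.mpr h') (by simp [h])
    · exact h'
    · exact absurd (h1.mpr h') (by simp [h])
  · intro h
    rcases lt_trichotomy (p j) (p k) with h' | h' | h'
    · exact absurd (h2.mp h') (by simp [h])
    · exact h'
    · exact absurd (h1.mp h') (by simp [h])
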